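/- If a T1 paratopological group G has a suitable set, then d(G) ≤ ψ(G) · e(G), where d(G) is the density, ψ(G) the pseudocharacter, and e(G) the extent of G. -/

import Mathlib

open Cardinal

def IsSuitable {G : Type*} [Group G] [TopologicalSpace G] (S : Set G) : Prop :=
  DiscreteTopology S ∧ IsClosed (S ∪ {1}) ∧ Dense (Subgroup.closure S : Set G)

/-- The density of a space: the smallest infinite cardinality of a dense subset. -/
noncomputable def densityCard (X : Type*) [TopologicalSpace X] : Cardinal :=
  max ℵ₀ (sInf {c : Cardinal | ∃ s : Set X, Dense s ∧ #s = c})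

/-- The pseudocharacter of a space: the smallest infinite cardinal `κ` such that every
point is the intersection of at most `κ` open sets. -/
noncomputable def pseudoCharacter (X : Type*) [TopologicalSpace X] : Cardinal :=
  sInf {κ : Cardinal | ℵ₀ ≤ κ ∧ ∀ x : X, ∃ 𝒰 : Set (Set X),
    #𝒰 ≤ κ ∧ (∀ U ∈ 𝒰, IsOpen U) ∧ ⋂₀ 𝒰 = {x}}

/-- The extent of a space: the supremum of cardinalities of closed discrete subspaces. -/
noncomputable def extentCard (X : Type*) [TopologicalSpace X] : Cardinal :=
  max ℵ₀ (sSup {c : Cardinal | ∃ s : Set X, IsClosed s ∧ DiscreteTopology s ∧ #s = c})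

/-- Cardinality bound for the subgroup closure of a set. -/
lemma mk_subgroup_closure_le {G : Type*} [Group G] (S : Set G) :
    #(Subgroup.closure S : Set G) ≤ max ℵ₀ #S := by
  have key : (Subgroup.closure S : Set G) ⊆
      Set.range (fun l : List ↥(S ∪ S⁻¹) => (l.map Subtype.val).prod) := by
    intro x hx
    have hx' : x ∈ Submonoid.closure (S ∪ S⁻¹) := by
      rw [← Subgroup.closure_toSubmonoid]; exact hx
    obtain ⟨l, hl, rfl⟩ := Submonoid.exists_list_of_mem_closure hx'
    refine ⟨l.attach.map fun a => ⟨a.1, hl a.1 a.2⟩, ?_⟩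
    simp [List.map_map, Function.comp_def]
  calc #(Subgroup.closure S : Set G)
      ≤ #(Set.range (fun l : List ↥(S ∪ S⁻¹) => (l.map Subtype.val).prod)) :=
        mk_le_mk_of_subset key
    _ ≤ #(List ↥(S ∪ S⁻¹)) := mk_range_le
    _ ≤ max ℵ₀ #(↥(S ∪ S⁻¹)) := mk_list_le_max _
    _ ≤ max ℵ₀ #S := by
        refine max_le (le_max_left _ _) ?_
        have h1 : #(↥(S ∪ S⁻¹)) ≤ #S + #(↥(S⁻¹ : Set G)) := mk_union_le _ _
        have h2 : #(↥(S⁻¹ : Set G)) = #S := by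
          rw [← Set.image_inv_eq_inv]
          exact Cardinal.mk_image_eq inv_injective
        rw [h2] at h1
        refine h1.trans ?_
        refine (Cardinal.add_le_max _ _).trans ?_
        simp [max_comm]

theorem stmt14 {G : Type*} [Group G] [TopologicalSpace G] [ContinuousMul G] [T1Space G]
    (hG : ∃ S : Set G, IsSuitable S) :
    densityCard G ≤ pseudoCharacter G * extentCard G := by
  obtain ⟨S, hSdisc, hScl, hSdense⟩ := hG
  set ψ := pseudoCharacter G with hψdef
  set e := extentCard G with hedef
  have heℵ : ℵ₀ ≤ e := le_max_left _ _
  -- ψ belongs to its defining set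
  have hψmem : ψ ∈ {κ : Cardinal | ℵ₀ ≤ κ ∧ ∀ x : G, ∃ 𝒰 : Set (Set G),
      #𝒰 ≤ κ ∧ (∀ U ∈ 𝒰, IsOpen U) ∧ ⋂₀ 𝒰 = {x}} := by
    apply csInf_mem
    refine ⟨max ℵ₀ (2 ^ #G), le_max_left _ _, fun x => ?_⟩
    refine ⟨{U | IsOpen U ∧ x ∈ U}, ?_, fun U hU => hU.1, ?_⟩
    · refine (mk_set_le _).trans ?_
      rw [mk_set]
      exact le_max_right _ _
    · ext y
      simp only [Set.mem_sInter, Set.mem_setOf_eq, Set.mem_singleton_iff]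
      constructor
      · intro h
        by_contra hy
        have hyy : y ∈ ({y}ᶜ : Set G) :=
          h {y}ᶜ ⟨isOpen_compl_singleton, fun h' => hy (Set.mem_singleton_iff.mp h').symm⟩
        exact hyy rfl
      · rintro rfl U ⟨_, hU⟩; exact hU
  have hψℵ : ℵ₀ ≤ ψ := hψmem.1
  obtain ⟨𝒰, h𝒰card, h𝒰open, h𝒰int⟩ := hψmem.2 1
  have h1U : ∀ U ∈ 𝒰, (1 : G) ∈ U := by
    intro U hU
    have : (1 : G) ∈ ⋂₀ 𝒰 := by rw [h𝒰int]; rfl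
    exact this U hU
  -- each S \ U is closed and discrete, hence bounded by the extent
  have hext : ∀ U ∈ 𝒰, #(↥(S \ U)) ≤ e := by
    intro U hU
    have hclosed : IsClosed (S \ U) := by
      have heq : S \ U = (S ∪ {1}) ∩ Uᶜ := by
        ext y
        simp only [Set.mem_diff, Set.mem_inter_iff, Set.mem_union, Set.mem_singleton_iff,
          Set.mem_compl_iff]
        constructor
        · rintro ⟨h1, h2⟩; exact ⟨Or.inl h1, h2⟩
        · rintro ⟨h1 | h1, h2⟩
          · exact ⟨h1, h2⟩
          · exact absurd (h1 ▸ h1U U hU) h2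
      rw [heq]
      exact hScl.inter (h𝒰open U hU).isClosed_compl
    have hdisc : DiscreteTopology (S \ U : Set G) :=
      DiscreteTopology.of_subset hSdisc Set.diff_subset
    have hbdd : BddAbove {c : Cardinal | ∃ s : Set G, IsClosed s ∧ DiscreteTopology s ∧ #s = c} :=
      ⟨#G, fun c hc => by obtain ⟨s, _, _, rfl⟩ := hc; exact mk_set_le s⟩
    have hmem : #(↥(S \ U)) ∈
        {c : Cardinal | ∃ s : Set G, IsClosed s ∧ DiscreteTopology s ∧ #s = c} :=
      ⟨S \ U, hclosed, hdisc, rfl⟩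
    exact le_trans (le_csSup hbdd hmem) (le_max_right _ _)
  -- S is covered by the pieces together with {1}
  have hcover : S ⊆ (⋃ U : 𝒰, (S \ (U : Set G))) ∪ {1} := by
    intro s hs
    by_cases h1 : s = (1 : G)
    · exact Or.inr h1
    · left
      have hns : s ∉ ⋂₀ 𝒰 := by rw [h𝒰int]; simpa using h1
      simp only [Set.mem_sInter, not_forall] at hns
      obtain ⟨U, hU, hsU⟩ := hns
      exact Set.mem_iUnion.mpr ⟨⟨U, hU⟩, hs, hsU⟩
  have hSle : #S ≤ ψ * e := by
    have h1 : #(↥((⋃ U : 𝒰, (S \ (U : Set G))) ∪ {1})) ≤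
        #(↥(⋃ U : 𝒰, (S \ (U : Set G)))) + 1 := by
      refine (mk_union_le _ _).trans ?_
      simp
    have h2 : #(↥(⋃ U : 𝒰, (S \ (U : Set G)))) ≤ ψ * e := by
      refine mk_iUnion_le_sum_mk.trans ?_
      calc (Cardinal.sum fun U : 𝒰 => #(↥(S \ (U : Set G))))
          ≤ Cardinal.sum fun _ : 𝒰 => e := Cardinal.sum_le_sum _ _ fun U => hext U U.2
        _ = #𝒰 * e := Cardinal.sum_const' _ _
        _ ≤ ψ * e := mul_le_mul_left h𝒰card e
    have hinf : ℵ₀ ≤ ψ * e := le_trans hψℵ (le_mul_of_one_le_right (zero_le)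
      (one_le_aleph0.trans heℵ))
    calc #S ≤ #(↥((⋃ U : 𝒰, (S \ (U : Set G))) ∪ {1})) := mk_le_mk_of_subset hcover
      _ ≤ #(↥(⋃ U : 𝒰, (S \ (U : Set G)))) + 1 := h1
      _ ≤ ψ * e + 1 := add_le_add_left h2 1
      _ = ψ * e := Cardinal.add_one_eq hinf
  -- conclude
  have hinf : ℵ₀ ≤ ψ * e := le_trans hψℵ (le_mul_of_one_le_right (zero_le)
    (one_le_aleph0.trans heℵ))
  have hd : sInf {c : Cardinal | ∃ s : Set G, Dense s ∧ #s = c} ≤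
      #(Subgroup.closure S : Set G) :=
    csInf_le (OrderBot.bddBelow _) ⟨(Subgroup.closure S : Set G), hSdense, rfl⟩
  refine max_le hinf (hd.trans ?_)
  refine (mk_subgroup_closure_le S).trans ?_
  exact max_le hinf (hSle.trans le_rfl)
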